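/- For every n ≥ 0 and every factor u of W_n: if p is the least period of u and |u| ≥ 2p, then |u| = 2p. Equivalently, every run (maximal periodic factor of exponent at least 2) in the ZWW word is a square. -/
import Mathlib


/-- The morphism `phi` on the alphabet `ℕ`: `phi (2i) = (2i)(2i+1)` and `phi (2i+1) = (2i+2)`. -/
def phi (a : ℕ) : List ℕ := if a % 2 = 0 then [a, a + 1] else [a + 1]

/-- The finite ZWW words: `W n = phi^n(0)`, so `W 0 = 0`, `W 1 = 01`, `W 2 = 012`, `W 3 = 01223`. -/
def W (n : ℕ) : List ℕ := (fun w => w.flatMap phi)^[n] [0]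

/-- A word `u` has period `p ≥ 1` if `u[j] = u[j+p]` whenever both positions lie in `u`. -/
def HasPeriod (u : List ℕ) (p : ℕ) : Prop :=
  1 ≤ p ∧ ∀ j : ℕ, j + p < u.length → u[j]? = u[j + p]?


lemma phi_even {a : ℕ} (h : a % 2 = 0) : phi a = [a, a+1] := by simp [phi, h]
lemma phi_odd {a : ℕ} (h : a % 2 = 1) : phi a = [a+1] := by simp [phi, h]
lemma W_zero : W 0 = [0] := rfl
lemma W_succ (n : ℕ) : W (n+1) = (W n).flatMap phi := by
  simp [W, Function.iterate_succ_apply']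
def psi : List ℕ → List ℕ
  | [] => []
  | [a] => if a % 2 = 0 then [a - 1] else []
  | a :: b :: t => if a % 2 = 1 then psi (b :: t)
      else if b % 2 = 1 then a :: psi t else (a - 1) :: psi (b :: t)
@[simp] lemma psi_nil : psi [] = [] := rfl
lemma psi_single_even {a} (h : a % 2 = 0) : psi [a] = [a-1] := by simp [psi, h]
lemma psi_single_odd {a} (h : a % 2 = 1) : psi [a] = [] := by simp [psi, h]
lemma psi_cons_odd {a b t} (h : a % 2 = 1) : psi (a :: b :: t) = psi (b :: t) := by simp [psi, h]
lemma psi_cons_even_odd {a b t} (ha : a % 2 = 0) (hb : b % 2 = 1) :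
    psi (a :: b :: t) = a :: psi t := by simp [psi, ha, hb]
lemma psi_cons_even_even {a b t} (ha : a % 2 = 0) (hb : b % 2 = 0) :
    psi (a :: b :: t) = (a-1) :: psi (b :: t) := by simp [psi, ha, hb]

lemma psi_append : ∀ (S₁ : List ℕ) (b : ℕ) (t : List ℕ), b % 2 = 0 →
    psi (S₁ ++ b :: t) = psi S₁ ++ psi (b :: t)
  | [], b, t, hb => by simp
  | [a], b, t, hb => by
      rcases Nat.mod_two_eq_zero_or_one a with ha | ha
      · rw [List.singleton_append, psi_cons_even_even ha hb, psi_single_even ha]; rfl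
      · rw [List.singleton_append, psi_cons_odd ha, psi_single_odd ha]; rfl
  | a :: c :: S, b, t, hb => by
      rcases Nat.mod_two_eq_zero_or_one a with ha | ha
      · rcases Nat.mod_two_eq_zero_or_one c with hc | hc
        · rw [List.cons_append, List.cons_append, psi_cons_even_even ha hc,
              psi_cons_even_even ha hc, ← List.cons_append, psi_append (c :: S) b t hb]
          rfl
        · rw [List.cons_append, List.cons_append, psi_cons_even_odd ha hc,
              psi_cons_even_odd ha hc, psi_append S b t hb]
          rfl
      · rw [List.cons_append, List.cons_append, psi_cons_odd ha, psi_cons_odd ha,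
            ← List.cons_append, psi_append (c :: S) b t hb]

lemma flatMap_head (w : List ℕ) : w.flatMap phi = [] ∨
    ∃ b t, w.flatMap phi = b :: t ∧ b % 2 = 0 := by
  cases w with
  | nil => left; rfl
  | cons a s =>
    right
    rcases Nat.mod_two_eq_zero_or_one a with ha | ha
    · exact ⟨a, (a+1) :: s.flatMap phi, by rw [List.flatMap_cons, phi_even ha]; rfl, ha⟩
    · exact ⟨a+1, s.flatMap phi, by rw [List.flatMap_cons, phi_odd ha]; rfl, by omega⟩

lemma psi_phi (w : List ℕ) : psi (w.flatMap phi) = w := by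
  induction w with
  | nil => simp
  | cons a s ih =>
    rw [List.flatMap_cons]
    rcases Nat.mod_two_eq_zero_or_one a with ha | ha
    · rcases flatMap_head s with h0 | ⟨b, t, hbt, hb⟩
      · rw [phi_even ha, h0, List.append_nil, psi_cons_even_odd ha (by omega)]
        rw [h0] at ih; simp only [psi_nil] at ih ⊢; rw [← ih]
      · rw [phi_even ha, hbt, List.cons_append, List.cons_append, List.nil_append,
            psi_cons_even_odd ha (by omega), ← hbt, ih]
    · rcases flatMap_head s with h0 | ⟨b, t, hbt, hb⟩
      · rw [phi_odd ha, h0, List.append_nil, psi_single_even (by omega)]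
        rw [h0] at ih
        simp only [psi_nil] at ih
        rw [← ih]; simp
      · rw [phi_odd ha, hbt, List.singleton_append, psi_cons_even_even (by omega) hb, ← hbt, ih]
        simp

lemma psi_head {a : ℕ} (t : List ℕ) (ha : a % 2 = 0) :
    ∃ h r, psi (a :: t) = h :: r ∧ (h = a ∨ h = a - 1) := by
  cases t with
  | nil => exact ⟨a - 1, [], psi_single_even ha, Or.inr rfl⟩
  | cons b s =>
    rcases Nat.mod_two_eq_zero_or_one b with hb | hb
    · exact ⟨a - 1, psi (b :: s), psi_cons_even_even ha hb, Or.inr rfl⟩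
    · exact ⟨a, psi s, psi_cons_even_odd ha hb, Or.inl rfl⟩

lemma flat_odd_pred : ∀ (w A C : List ℕ) (a : ℕ), w.flatMap phi = A ++ a :: C → a % 2 = 1 →
    ∃ A', A = A' ++ [a - 1]
  | [], A, C, a, h, ha => by simp at h
  | b :: s, A, C, a, h, ha => by
    rw [List.flatMap_cons] at h
    rcases Nat.mod_two_eq_zero_or_one b with hb | hb
    · rw [phi_even hb] at h
      cases A with
      | nil =>
        simp only [List.nil_append, List.cons_append, List.cons.injEq] at h
        omega
      | cons a0 A2 =>
        simp only [List.cons_append, List.cons.injEq] at h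
        obtain ⟨rfl, h⟩ := h
        cases A2 with
        | nil =>
          simp only [List.nil_append, List.cons.injEq] at h
          exact ⟨[], by simp [← h.1]⟩
        | cons a1 A3 =>
          simp only [List.cons_append, List.cons.injEq] at h
          obtain ⟨rfl, h⟩ := h
          obtain ⟨A', hA'⟩ := flat_odd_pred s A3 C a h ha
          exact ⟨b :: (b+1) :: A', by simp [hA']⟩
    · rw [phi_odd hb] at h
      cases A with
      | nil =>
        simp only [List.nil_append, List.cons_append, List.cons.injEq] at h
        omega
      | cons a0 A2 =>
        simp only [List.cons_append, List.cons.injEq] at h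
        obtain ⟨rfl, h⟩ := h
        obtain ⟨A', hA'⟩ := flat_odd_pred s A2 C a h ha
        exact ⟨(b+1) :: A', by simp [hA']⟩

lemma W_odd_pred {n : ℕ} {A C : List ℕ} {a : ℕ} (h : W n = A ++ a :: C) (ha : a % 2 = 1) :
    ∃ A', A = A' ++ [a - 1] := by
  cases n with
  | zero =>
    rw [W_zero] at h
    cases A with
    | nil => simp only [List.nil_append, List.cons.injEq] at h; omega
    | cons a0 A2 =>
      simp only [List.cons_append, List.cons.injEq] at h
      exact absurd h.2.symm (by simp)
  | succ m =>
    rw [W_succ] at h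
    exact flat_odd_pred _ _ _ _ h ha

lemma W_zero_head : ∀ n, ∃ t, W n = 0 :: t ∧ 0 ∉ t := by
  intro n
  induction n with
  | zero => exact ⟨[], rfl, by simp⟩
  | succ m ih =>
    obtain ⟨t, ht, h0⟩ := ih
    refine ⟨1 :: t.flatMap phi, ?_, ?_⟩
    · rw [W_succ, ht, List.flatMap_cons, phi_even (by norm_num)]
      rfl
    · intro hmem
      rcases List.mem_cons.1 hmem with h | h
      · simp at h
      · obtain ⟨b, hb, hab⟩ := List.mem_flatMap.1 h
        rcases Nat.mod_two_eq_zero_or_one b with hbe | hbo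
        · rw [phi_even hbe] at hab
          have hb0 : b = 0 := by simp at hab; omega
          exact h0 (hb0 ▸ hb)
        · rw [phi_odd hbo] at hab
          simp at hab

lemma zero_not_in_tail {n : ℕ} {A C : List ℕ} (h : W n = A ++ 0 :: C) (hA : A ≠ []) : False := by
  obtain ⟨t, ht, h0⟩ := W_zero_head n
  cases A with
  | nil => exact hA rfl
  | cons a A' =>
    rw [ht] at h
    simp only [List.cons_append, List.cons.injEq] at h
    exact h0 (h.2 ▸ (by simp : (0:ℕ) ∈ A' ++ 0 :: C))

lemma W_last : ∀ n, ∃ Y, W n = Y ++ [n] ∧ ∀ a ∈ Y, a < n := by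
  intro n
  induction n with
  | zero => exact ⟨[], rfl, by simp⟩
  | succ m ih =>
    obtain ⟨Y, hY, hlt⟩ := ih
    have bound : ∀ a ∈ Y.flatMap phi, a < m + 1 := by
      intro a ha
      obtain ⟨b, hb, hab⟩ := List.mem_flatMap.1 ha
      have hbm := hlt b hb
      rcases Nat.mod_two_eq_zero_or_one b with hbe | hbo
      · rw [phi_even hbe] at hab; simp at hab; omega
      · rw [phi_odd hbo] at hab; simp at hab; omega
    rcases Nat.mod_two_eq_zero_or_one m with hm | hm
    · refine ⟨Y.flatMap phi ++ [m], ?_, ?_⟩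
      · rw [W_succ, hY, List.flatMap_append, List.flatMap_cons, phi_even hm]
        simp
      · intro a ha
        rcases List.mem_append.1 ha with h | h
        · exact bound a h
        · simp at h; omega
    · refine ⟨Y.flatMap phi, ?_, bound⟩
      rw [W_succ, hY, List.flatMap_append, List.flatMap_cons, phi_odd hm]
      simp

lemma last_extract {l r s : List ℕ} {a : ℕ} (h : l ++ r = s ++ [a]) (hr : r ≠ []) :
    ∃ r', r = r' ++ [a] := by
  rcases r.eq_nil_or_concat with rfl | ⟨r', b, rfl⟩
  · exact absurd rfl hr
  · rw [List.concat_eq_append] at h ⊢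
    rw [← List.append_assoc] at h
    obtain ⟨-, hb⟩ := List.append_inj' h rfl
    simp only [List.cons.injEq] at hb
    exact ⟨r', by rw [hb.1]⟩

lemma psi_append2 (a : ℕ) (S : List ℕ) (b : ℕ) (t : List ℕ) (hb : b % 2 = 0) :
    psi (a :: (S ++ b :: t)) = psi (a :: S) ++ psi (b :: t) := psi_append (a :: S) b t hb

lemma core_even (m : ℕ)
    (IH : ∀ (x0 : ℕ) (xt : List ℕ) (d : ℕ) (A B : List ℕ),
      W m = A ++ (x0 :: xt) ++ (x0 :: xt) ++ d :: B → d ≤ x0 → False) :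
    ∀ (x0 : ℕ) (xt : List ℕ) (d : ℕ) (A B : List ℕ),
      W (m+1) = A ++ (x0 :: xt) ++ (x0 :: xt) ++ d :: B → x0 % 2 = 0 → d ≤ x0 → False := by
  intro x0 xt d A B hW hx0 hd
  have hx2 : 2 ≤ x0 := by
    rcases Nat.lt_or_ge x0 2 with h | h
    · exfalso
      have hx00 : x0 = 0 := by omega
      subst hx00
      exact zero_not_in_tail (show W (m+1) = (A ++ (0 :: xt)) ++ 0 :: (xt ++ d :: B) by
        rw [hW]; simp [List.append_assoc]) (by simp)
    · exact h
  have hpsiW : W m = psi (W (m+1)) := by rw [W_succ, psi_phi]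
  rcases Nat.mod_two_eq_zero_or_one d with hde | hdo
  · -- d even
    cases B with
    | nil =>
      obtain ⟨Y, hy, hlt⟩ := W_last (m+1)
      have h1 : (A ++ (x0::xt) ++ (x0::xt)) ++ [d] = Y ++ [m+1] := by
        rw [← hy, hW]
      obtain ⟨h2, h3⟩ := List.append_inj' h1 rfl
      have hx0Y : x0 ∈ Y := by rw [← h2]; simp
      have := hlt x0 hx0Y
      simp only [List.cons.injEq] at h3
      omega
    | cons b' B' =>
      have hsplit : W m = psi A ++ (psi (x0 :: xt) ++ (psi (x0 :: xt) ++ psi (d :: b' :: B'))) := by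
        rw [hpsiW, hW]
        simp only [List.append_assoc, List.cons_append]
        rw [psi_append A x0 _ hx0, psi_append2 x0 xt x0 _ hx0, psi_append2 x0 xt d _ hde]
      obtain ⟨Y0, Yt, hpsix, hY0⟩ := psi_head xt hx0
      obtain ⟨d₁, rest, hpsid, hd₁le, hd₁ge⟩ :
          ∃ d₁ rest, psi (d :: b' :: B') = d₁ :: rest ∧ d₁ ≤ d ∧ d ≤ d₁ + 1 := by
        rcases Nat.mod_two_eq_zero_or_one b' with hb'e | hb'o
        · exact ⟨d - 1, psi (b' :: B'), psi_cons_even_even hde hb'e, by omega, by omega⟩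
        · exact ⟨d, psi B', psi_cons_even_odd hde hb'o, le_rfl, by omega⟩
      by_cases hcmp : d₁ ≤ Y0
      · refine IH Y0 Yt d₁ (psi A) rest ?_ hcmp
        rw [hsplit, hpsix, hpsid]; simp [List.append_assoc]
      · have hY0v : Y0 = x0 - 1 := by rcases hY0 with h | h <;> omega
        have hd₁v : d₁ = x0 := by omega
        have hWm : W m = psi A ++ (Y0 :: Yt) ++ (Y0 :: Yt) ++ x0 :: rest := by
          rw [hsplit, hpsix, hpsid, hd₁v]; simp [List.append_assoc]
        have hY0odd : Y0 % 2 = 1 := by omega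
        obtain ⟨As, hAs⟩ := W_odd_pred (show W m = (psi A ++ (Y0::Yt)) ++ Y0 :: (Yt ++ x0 :: rest) by
            rw [hWm]; simp [List.append_assoc]) hY0odd
        obtain ⟨Y₂, hY₂⟩ := last_extract hAs (by simp)
        obtain ⟨A₂, hA₂⟩ := W_odd_pred (show W m = psi A ++ Y0 :: (Yt ++ ((Y0::Yt) ++ x0 :: rest)) by
            rw [hWm]; simp [List.append_assoc]) hY0odd
        refine IH (Y0-1) Y₂ (Y0-1) A₂ (x0 :: rest) ?_ le_rfl
        rw [hWm, hA₂, hY₂]; simp [List.append_assoc]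
  · -- d odd
    have hdx0 : d ≤ x0 - 1 := by omega
    obtain ⟨A₃, hA₃⟩ := W_odd_pred (show W (m+1) = (A ++ (x0::xt) ++ (x0::xt)) ++ d :: B by
        rw [hW]) hdo
    obtain ⟨x₄, hx₄⟩ := last_extract (show (A ++ (x0::xt)) ++ (x0::xt) = A₃ ++ [d-1] by
        rw [← hA₃]) (by simp)
    cases x₄ with
    | nil =>
      simp only [List.nil_append, List.cons.injEq] at hx₄
      obtain ⟨h1, -⟩ := hx₄
      omega
    | cons z x₄t =>
      simp only [List.cons_append, List.cons.injEq] at hx₄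
      obtain ⟨hz, hxt⟩ := hx₄
      subst hz
      have hd3 : 3 ≤ d := by
        rcases Nat.lt_or_ge d 3 with h | h
        · exfalso
          have h0 : d - 1 = 0 := by omega
          refine zero_not_in_tail (n := m+1)
            (A := A ++ (x0::xt) ++ (x0 :: x₄t)) (C := d :: B) ?_ (by simp)
          rw [hW, hxt, h0]; simp [List.append_assoc]
        · exact h
      have hWnf : W (m+1)
          = A ++ x0 :: (x₄t ++ (d-1) :: (x0 :: (x₄t ++ (d-1) :: (d :: B)))) := by
        rw [hW, hxt]; simp [List.append_assoc]
      have hsplit1 : W m = psi A ++ (psi (x0::x₄t) ++ ((d-1-1) :: (psi (x0::x₄t) ++ ((d-1) :: psi B)))) := by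
        rw [hpsiW, hWnf, psi_append A x0 _ hx0,
            psi_append2 x0 x₄t (d-1) _ (by omega),
            psi_cons_even_even (by omega : (d-1)%2 = 0) hx0,
            psi_append2 x0 x₄t (d-1) _ (by omega),
            psi_cons_even_odd (by omega : (d-1)%2 = 0) hdo]
      obtain ⟨P0, Pt, hP, hPdisj⟩ := psi_head x₄t hx0
      rw [hP] at hsplit1
      have hP0 : d ≤ P0 := by rcases hPdisj with h | h <;> omega
      cases m with
      | zero =>
        have hlen := congrArg List.length hsplit1
        simp [W_zero] at hlen
        omega
      | succ m' =>
        obtain ⟨A₄, hA₄⟩ := W_odd_pred (show W (m'+1)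
            = (psi A ++ (P0::Pt)) ++ (d-1-1) :: ((P0::Pt) ++ ((d-1) :: psi B)) by
          rw [hsplit1]; simp [List.append_assoc]) (by omega : (d-1-1) % 2 = 1)
        obtain ⟨P₂, hP₂⟩ := last_extract hA₄ (by simp)
        cases P₂ with
        | nil =>
          simp only [List.nil_append, List.cons.injEq] at hP₂
          obtain ⟨h1, -⟩ := hP₂
          omega
        | cons q P₂t =>
          simp only [List.cons_append, List.cons.injEq] at hP₂
          obtain ⟨hq, hPt⟩ := hP₂
          subst hq
          have hP0e : P0 % 2 = 0 := by
            rcases Nat.mod_two_eq_zero_or_one P0 with h | h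
            · exact h
            · exfalso
              obtain ⟨A₆, hA₆⟩ := W_odd_pred (show W (m'+1)
                  = (psi A ++ (P0::Pt) ++ [d-1-1]) ++ P0 :: (Pt ++ ((d-1) :: psi B)) by
                rw [hsplit1]; simp [List.append_assoc]) h
              obtain ⟨r', hr'⟩ := last_extract (show (psi A ++ (P0::Pt)) ++ [d-1-1] = A₆ ++ [P0-1] by
                rw [← hA₆]) (by simp)
              have heq : d-1-1 = P0 - 1 := by
                cases r' with
                | nil => simpa using hr'
                | cons u r'' => exfalso; have hl := congrArg List.length hr'; simp at hl
              omega
          have hd5 : 5 ≤ d := by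
            rcases Nat.lt_or_ge d 5 with h | h
            · exfalso
              have h0 : d - 1 - 1 - 1 = 0 := by omega
              refine zero_not_in_tail (n := m'+1)
                (A := psi A ++ (P0 :: (P₂t ++ [0])) ++ ((d-1-1) :: (P0 :: P₂t)))
                (C := (d-1) :: psi B) ?_ (by simp)
              rw [hsplit1, hPt, h0]; simp [List.append_assoc]
            · exact h
          have hsplit2 : W m' = psi (psi A) ++ (psi (P0::P₂t) ++ ((d-1-1-1) :: (psi (P0::P₂t)
              ++ ((d-1-1-1-1) :: psi ((d-1) :: psi B))))) := by
            have hnf2 : W (m'+1) = psi A ++ P0 :: (P₂t ++ (d-1-1-1) :: ((d-1-1) :: (P0 ::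
                (P₂t ++ (d-1-1-1) :: ((d-1) :: psi B))))) := by
              rw [hsplit1, hPt]; simp [List.append_assoc]
            rw [show W m' = psi (W (m'+1)) by rw [W_succ, psi_phi], hnf2,
                psi_append (psi A) P0 _ hP0e,
                psi_append2 P0 P₂t (d-1-1-1) _ (by omega),
                psi_cons_even_odd (by omega : (d-1-1-1)%2=0) (by omega : (d-1-1)%2=1),
                psi_append2 P0 P₂t (d-1-1-1) _ (by omega),
                psi_cons_even_even (by omega : (d-1-1-1)%2=0) (by omega : (d-1)%2=0)]
          obtain ⟨Q0, Qt, hQ, hQdisj⟩ := psi_head P₂t hP0e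
          rw [hQ] at hsplit2
          have hQ0 : d - 1 ≤ Q0 := by rcases hQdisj with h | h <;> omega
          cases m' with
          | zero =>
            have hlen := congrArg List.length hsplit2
            simp [W_zero] at hlen
            omega
          | succ m'' =>
            obtain ⟨A₇, hA₇⟩ := W_odd_pred (show W (m''+1)
                = (psi (psi A) ++ (Q0::Qt) ++ ((d-1-1-1) :: (Q0::Qt)))
                  ++ (d-1-1-1-1) :: psi ((d-1) :: psi B) by
              rw [hsplit2]; simp [List.append_assoc]) (by omega : (d-1-1-1-1) % 2 = 1)
            obtain ⟨Q₂, hQ₂⟩ := last_extract (show (psi (psi A) ++ (Q0::Qt) ++ [d-1-1-1]) ++ (Q0::Qt)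
                = A₇ ++ [d-1-1-1-1-1] by rw [← hA₇]; simp [List.append_assoc]) (by simp)
            cases Q₂ with
            | nil =>
              simp only [List.nil_append, List.cons.injEq] at hQ₂
              obtain ⟨h1, -⟩ := hQ₂
              omega
            | cons w Q₂t =>
              simp only [List.cons_append, List.cons.injEq] at hQ₂
              obtain ⟨hw, hQt⟩ := hQ₂
              subst hw
              have hQ0e : Q0 % 2 = 0 := by
                rcases Nat.mod_two_eq_zero_or_one Q0 with h | h
                · exact h
                · exfalso
                  obtain ⟨A₉, hA₉⟩ := W_odd_pred (show W (m''+1)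
                      = (psi (psi A) ++ (Q0::Qt) ++ [d-1-1-1]) ++ Q0 ::
                        (Qt ++ ((d-1-1-1-1) :: psi ((d-1) :: psi B))) by
                    rw [hsplit2]; simp [List.append_assoc]) h
                  obtain ⟨r', hr'⟩ := last_extract (show (psi (psi A) ++ (Q0::Qt)) ++ [d-1-1-1]
                      = A₉ ++ [Q0-1] by rw [← hA₉]) (by simp)
                  have heq : d-1-1-1 = Q0 - 1 := by
                    cases r' with
                    | nil => simpa using hr'
                    | cons u r'' => exfalso; have hl := congrArg List.length hr'; simp at hl
                  omega
              have hd7 : 7 ≤ d := by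
                rcases Nat.lt_or_ge d 7 with h | h
                · exfalso
                  have h0 : d-1-1-1-1-1 = 0 := by omega
                  refine zero_not_in_tail (n := m''+1)
                    (A := psi (psi A) ++ (Q0 :: (Q₂t ++ [0])) ++ ((d-1-1-1) :: (Q0 :: Q₂t)))
                    (C := (d-1-1-1-1) :: psi ((d-1) :: psi B)) ?_ (by simp)
                  rw [hsplit2, hQt, h0]; simp [List.append_assoc]
                · exact h
              have hsplit3 : W m'' = psi (psi (psi A)) ++ (psi (Q0::Q₂t) ++ ((d-1-1-1-1-1-1) ::
                  ((d-1-1-1-1) :: psi (Q0 :: (Q₂t ++ (d-1-1-1-1-1) ::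
                    ((d-1-1-1-1) :: psi ((d-1) :: psi B))))))) := by
                have hnf3 : W (m''+1) = psi (psi A) ++ Q0 :: (Q₂t ++ (d-1-1-1-1-1) ::
                    ((d-1-1-1) :: (Q0 :: (Q₂t ++ (d-1-1-1-1-1) ::
                      ((d-1-1-1-1) :: psi ((d-1) :: psi B)))))) := by
                  rw [hsplit2, hQt]; simp [List.append_assoc]
                rw [show W m'' = psi (W (m''+1)) by rw [W_succ, psi_phi], hnf3,
                    psi_append (psi (psi A)) Q0 _ hQ0e,
                    psi_append2 Q0 Q₂t (d-1-1-1-1-1) _ (by omega),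
                    psi_cons_even_even (by omega : (d-1-1-1-1-1)%2=0) (by omega : (d-1-1-1)%2=0),
                    psi_cons_even_even (by omega : (d-1-1-1)%2=0) hQ0e]
              obtain ⟨A₈, hA₈⟩ := W_odd_pred (show W m''
                  = (psi (psi (psi A)) ++ psi (Q0::Q₂t) ++ [d-1-1-1-1-1-1]) ++ (d-1-1-1-1) ::
                    psi (Q0 :: (Q₂t ++ (d-1-1-1-1-1) :: ((d-1-1-1-1) :: psi ((d-1) :: psi B)))) by
                rw [hsplit3]; simp [List.append_assoc]) (by omega : (d-1-1-1-1) % 2 = 1)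
              obtain ⟨r', hr'⟩ := last_extract (show (psi (psi (psi A)) ++ psi (Q0::Q₂t))
                  ++ [d-1-1-1-1-1-1] = A₈ ++ [d-1-1-1-1-1] by
                rw [← hA₈]) (by simp)
              have heq : d-1-1-1-1-1-1 = d-1-1-1-1-1 := by
                cases r' with
                | nil => simpa using hr'
                | cons u r'' => exfalso; have hl := congrArg List.length hr'; simp at hl
              omega

theorem core : ∀ n : ℕ, ∀ (x0 : ℕ) (xt : List ℕ) (d : ℕ) (A B : List ℕ),
    W n = A ++ (x0 :: xt) ++ (x0 :: xt) ++ d :: B → d ≤ x0 → False := by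
  intro n
  induction n with
  | zero =>
    intro x0 xt d A B hW hd
    have hlen := congrArg List.length hW
    simp [W_zero] at hlen
    omega
  | succ m IH =>
    intro x0 xt d A B hW hd
    rcases Nat.mod_two_eq_zero_or_one x0 with hx0 | hx0
    · exact core_even m IH x0 xt d A B hW hx0 hd
    · obtain ⟨As, hAs⟩ := W_odd_pred (show W (m+1) = (A ++ (x0::xt)) ++ x0 :: (xt ++ d :: B) by
          rw [hW]; simp [List.append_assoc]) hx0
      obtain ⟨x₂, hx₂⟩ := last_extract hAs (by simp)
      obtain ⟨A₂, hA₂⟩ := W_odd_pred (show W (m+1) = A ++ x0 :: (xt ++ ((x0::xt) ++ d :: B)) by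
          rw [hW]; simp [List.append_assoc]) hx0
      refine core_even m IH (x0-1) x₂ (x0-1) A₂ (d :: B) ?_ (by omega) le_rfl
      rw [hW, hA₂, hx₂]; simp [List.append_assoc]



/-- For every factor `u` of a ZWW word: if `p` is the least period of `u` and
`|u| ≥ 2p`, then `|u| = 2p` (equivalently, every run in the ZWW word is a square). -/
theorem zww_runs_are_squares : ∀ n : ℕ, ∀ u : List ℕ, u <:+: W n →
    ∀ p : ℕ, HasPeriod u p → (∀ q : ℕ, HasPeriod u q → p ≤ q) →
    2 * p ≤ u.length → u.length = 2 * p := by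
  intro n u hinf p hper _hmin hlen
  obtain ⟨hp1, hperiod⟩ := hper
  by_contra hne
  have hlt : 2 * p < u.length := lt_of_le_of_ne hlen (fun h => hne h.symm)
  have h1 : (u.drop p).take p = u.take p := by
    apply List.ext_getElem?
    intro i
    by_cases hi : i < p
    · rw [List.getElem?_take_of_lt hi, List.getElem?_take_of_lt hi, List.getElem?_drop]
      rw [show p + i = i + p by omega]
      exact (hperiod i (by omega)).symm
    · rw [List.getElem?_eq_none, List.getElem?_eq_none]
      · simp; omega
      · simp; omega
  have hu : u = u.take p ++ (u.take p ++ u.drop (2*p)) := by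
    conv_lhs => rw [← List.take_append_drop p u, ← List.take_append_drop p (u.drop p)]
    rw [h1, List.drop_drop]
    rw [show p + p = 2*p by omega]
  have hd1 : u.drop (2*p) = u[2*p]'hlt :: u.drop (2*p+1) := List.drop_eq_getElem_cons hlt
  have hd0 : u[2*p]'hlt = u[0]'(by omega) := by
    have e1 := hperiod p (by omega)
    have e2 := hperiod 0 (by omega)
    simp only [Nat.zero_add] at e2
    have e3 : u[0]? = u[2*p]? := by
      rw [e2, e1, show p + p = 2*p by omega]
    rw [List.getElem?_eq_getElem hlt, List.getElem?_eq_getElem (by omega : 0 < u.length)] at e3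
    exact (Option.some.inj e3).symm
  obtain ⟨x0, xt', hx⟩ : ∃ x0 xt', u.take p = x0 :: xt' := by
    cases hc : u.take p with
    | nil =>
      exfalso
      have hl : (u.take p).length = p := by simp; omega
      rw [hc] at hl
      simp at hl
      omega
    | cons a b => exact ⟨a, b, rfl⟩
  have hx0 : x0 = u[0]'(by omega) := by
    have hg : (u.take p)[0]? = u[0]? := List.getElem?_take_of_lt (by omega)
    rw [hx, List.getElem?_eq_getElem (by omega : 0 < u.length)] at hg
    simpa using hg
  obtain ⟨s, t, hst⟩ := hinf
  refine core n x0 xt' (u[2*p]'hlt) s (u.drop (2*p+1) ++ t) ?_ (by rw [hd0, hx0])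
  rw [← hst]
  conv_lhs => rw [hu, hd1, hx]
  simp only [List.append_assoc, List.cons_append, List.nil_append]
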